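/- Let M be an MV-effect algebra, B(M) the Boolean algebra R-generated by M, and φ_M : B(M) → M the canonical morphism (given on chain representations by φ_M(x₁ + ⋯ + x_{2n}) = ⊕ᵢ (x_{2i} ⊖ x_{2i-1})). Let G(M) be the group of all φ_M-preserving automorphisms of B(M). Then for all u, v ∈ B(M): there exists f ∈ G(M) with f(u) = v if and only if φ_M(u) = φ_M(v). -/
import Mathlib


/-- An effect algebra: a partial algebra `(α; ⊕, 0, 1)`.  The partial operation is
encoded by a total function `add` together with a definedness predicate `D`. -/
structure EffectAlgebra (α : Type*) where
  D : α → α → Prop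
  add : α → α → α
  zero : α
  one : α
  comm_def : ∀ a b, D a b → D b a
  comm : ∀ a b, D a b → add a b = add b a
  assoc_def₁ : ∀ a b c, D a b → D (add a b) c → D b c
  assoc_def₂ : ∀ a b c, D a b → D (add a b) c → D a (add b c)
  assoc : ∀ a b c, D a b → D (add a b) c → add (add a b) c = add a (add b c)
  orth_exists : ∀ a, ∃! b, D a b ∧ add a b = one
  add_one : ∀ a, D a one → a = zero

namespace EffectAlgebra

variable {α : Type*}
open Classical

/-- The induced order: `a ≤ b` iff `∃ c, a ⊕ c = b`. -/
def le (E : EffectAlgebra α) (a b : α) : Prop := ∃ c, E.D a c ∧ E.add a c = b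

/-- The orthosupplement `a'`. -/
noncomputable def orth (E : EffectAlgebra α) (a : α) : α := (E.orth_exists a).choose

/-- Partial difference: `sub b a = b ⊖ a`, intended for `a ≤ b`. -/
noncomputable def sub (E : EffectAlgebra α) (b a : α) : α :=
  if h : ∃ c, E.D a c ∧ E.add a c = b then h.choose else E.zero

end EffectAlgebra

namespace EffectAlgebra

variable {α : Type*} (E : EffectAlgebra α)

lemma orth_spec (a : α) : E.D a (E.orth a) ∧ E.add a (E.orth a) = E.one :=
  (E.orth_exists a).choose_spec.1

lemma orth_unique {a b : α} (h : E.D a b) (h2 : E.add a b = E.one) : b = E.orth a :=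
  (E.orth_exists a).choose_spec.2 b ⟨h, h2⟩

lemma orth_orth (a : α) : E.orth (E.orth a) = a := by
  have h := E.orth_spec a
  exact (E.orth_unique (E.comm_def _ _ h.1) (by rw [E.comm _ _ (E.comm_def _ _ h.1), h.2])).symm

lemma orth_inj {a b : α} (h : E.orth a = E.orth b) : a = b := by
  rw [← E.orth_orth a, h, E.orth_orth]

lemma zero_eq_orth_one : E.zero = E.orth E.one := by
  have h := E.orth_spec E.one
  have := E.add_one _ (E.comm_def _ _ h.1)
  rw [← this]

lemma D_one_zero : E.D E.one E.zero := by
  rw [E.zero_eq_orth_one]; exact (E.orth_spec E.one).1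

lemma one_add_zero : E.add E.one E.zero = E.one := by
  rw [E.zero_eq_orth_one]; exact (E.orth_spec E.one).2

lemma D_zero_right (a : α) : E.D a E.zero := by
  have h := E.orth_spec (E.orth a)
  rw [E.orth_orth] at h
  -- h : D a' a  and a' ⊕ a = 1  where a' = orth a ... careful
  -- Use: D (orth a) a, (orth a)⊕a = 1, then D ((orth a)⊕a) 0 = D 1 0
  have h1 : E.D (E.add (E.orth a) a) E.zero := by rw [h.2]; exact E.D_one_zero
  exact E.assoc_def₁ _ _ _ h.1 h1

lemma add_zero (a : α) : E.add a E.zero = a := by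
  have h := E.orth_spec (E.orth a)
  rw [E.orth_orth] at h
  have h1 : E.D (E.add (E.orth a) a) E.zero := by rw [h.2]; exact E.D_one_zero
  have h2 := E.assoc _ _ _ h.1 h1
  rw [h.2, E.one_add_zero] at h2
  -- h2 : 1 = (orth a) ⊕ (a ⊕ 0)
  have hD := E.assoc_def₂ _ _ _ h.1 h1
  have := E.orth_unique hD h2.symm
  rw [E.orth_orth] at this
  exact this

lemma D_zero_left (a : α) : E.D E.zero a := E.comm_def _ _ (E.D_zero_right a)

lemma zero_add (a : α) : E.add E.zero a = a := by
  rw [E.comm _ _ (E.D_zero_left a), E.add_zero]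

lemma cancel {a b c : α} (hab : E.D a b) (hac : E.D a c) (h : E.add a b = E.add a c) :
    b = c := by
  apply E.orth_inj
  have key : ∀ x y : α, E.D x y → E.orth y = E.add x (E.orth (E.add x y)) := by
    intro x y hxy
    have hs := E.orth_spec (E.add x y)
    have hyx := E.comm_def _ _ hxy
    have hD : E.D (E.add y x) (E.orth (E.add x y)) := by rw [E.comm _ _ hyx]; exact hs.1
    have h1 := E.assoc_def₂ _ _ _ hyx hD
    have h2 := E.assoc _ _ _ hyx hD
    rw [E.comm _ _ hyx, hs.2] at h2
    exact (E.orth_unique h1 h2.symm).symm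
  rw [key a b hab, key a c hac, h]

lemma pos {a b : α} (hab : E.D a b) (h : E.add a b = E.zero) : a = E.zero := by
  have h1 : E.D (E.add a b) E.one := by rw [h]; exact E.D_zero_left E.one
  have hb1 := E.assoc_def₁ _ _ _ hab h1
  have hb0 := E.add_one _ hb1
  rw [hb0, E.add_zero] at h
  exact h

lemma le_refl (a : α) : E.le a a := ⟨E.zero, E.D_zero_right a, E.add_zero a⟩

lemma zero_le (a : α) : E.le E.zero a := ⟨a, E.D_zero_left a, E.zero_add a⟩

lemma le_one (a : α) : E.le a E.one := ⟨E.orth a, (E.orth_spec a).1, (E.orth_spec a).2⟩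

lemma le_zero {a : α} (h : E.le a E.zero) : a = E.zero := by
  obtain ⟨c, hc, hc2⟩ := h
  exact E.pos hc hc2

lemma le_trans {a b c : α} (h1 : E.le a b) (h2 : E.le b c) : E.le a c := by
  obtain ⟨x, hx, hx2⟩ := h1
  obtain ⟨y, hy, hy2⟩ := h2
  rw [← hx2] at hy hy2
  refine ⟨E.add x y, E.assoc_def₂ _ _ _ hx hy, ?_⟩
  rw [← E.assoc _ _ _ hx hy, hy2]

lemma le_antisymm {a b : α} (h1 : E.le a b) (h2 : E.le b a) : a = b := by
  obtain ⟨x, hx, hx2⟩ := h1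
  obtain ⟨y, hy, hy2⟩ := h2
  rw [← hx2] at hy hy2
  have hD := E.assoc_def₂ _ _ _ hx hy
  have h3 := E.assoc _ _ _ hx hy
  rw [hy2] at h3
  -- h3 : a = a ⊕ (x ⊕ y)
  have h4 : E.add a E.zero = E.add a (E.add x y) := by rw [E.add_zero]; exact h3
  have h5 := E.cancel (E.D_zero_right a) hD h4
  have hx0 := E.pos (E.assoc_def₁ _ _ _ hx hy) h5.symm
  rw [hx0, E.add_zero] at hx2
  exact hx2

/-- reassociation the other way -/
lemma assoc' {a b c : α} (hbc : E.D b c) (ha : E.D a (E.add b c)) :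
    E.D a b ∧ E.D (E.add a b) c ∧ E.add a (E.add b c) = E.add (E.add a b) c := by
  have hcb := E.comm_def _ _ hbc
  have h1 : E.D (E.add c b) a := by rw [E.comm _ _ hcb]; exact E.comm_def _ _ ha
  have hba : E.D b a := E.assoc_def₁ _ _ _ hcb h1
  have hab : E.D a b := E.comm_def _ _ hba
  have h2 : E.D c (E.add b a) := E.assoc_def₂ _ _ _ hcb h1
  have h3 : E.D c (E.add a b) := by rw [E.comm _ _ hab]; exact h2
  have habc : E.D (E.add a b) c := E.comm_def _ _ h3
  refine ⟨hab, habc, ?_⟩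
  have e1 := E.assoc _ _ _ hcb h1
  calc E.add a (E.add b c) = E.add (E.add b c) a := E.comm _ _ ha
    _ = E.add (E.add c b) a := by rw [E.comm _ _ hbc]
    _ = E.add c (E.add b a) := e1
    _ = E.add c (E.add a b) := by rw [E.comm _ _ hba]
    _ = E.add (E.add a b) c := E.comm _ _ h3

lemma D_mono_right {a b c : α} (hab : E.D a b) (h : E.le c b) : E.D a c := by
  obtain ⟨d, hd, hd2⟩ := h
  rw [← hd2] at hab
  exact (E.assoc' hd hab).1

lemma cancel_le {a b c : α} (hab : E.D a b) (hac : E.D a c)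
    (h : E.le (E.add a b) (E.add a c)) : E.le b c := by
  obtain ⟨w, hw, hw2⟩ := h
  have hbw := E.assoc_def₁ _ _ _ hab hw
  have hD := E.assoc_def₂ _ _ _ hab hw
  have h2 := E.assoc _ _ _ hab hw
  rw [hw2] at h2
  have := E.cancel hac hD h2
  exact ⟨w, hbw, this.symm⟩

lemma add_le_add_left {a b c : α} (h : E.le c b) (hab : E.D a b) :
    E.le (E.add a c) (E.add a b) := by
  obtain ⟨w, hw, hw2⟩ := h
  have hac : E.D a c := E.D_mono_right hab (⟨w, hw, hw2⟩)
  rw [← hw2] at hab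
  have h3 := (E.assoc' hw hab).2.2
  rw [hw2] at hab
  refine ⟨w, (E.assoc' hw (by rw [hw2]; exact hab)).2.1, ?_⟩
  rw [← h3, hw2]

lemma le_add_left {a b : α} (hab : E.D a b) : E.le a (E.add a b) := ⟨b, hab, rfl⟩

lemma le_add_right {a b : α} (hab : E.D a b) : E.le b (E.add a b) :=
  ⟨a, E.comm_def _ _ hab, E.comm _ _ (E.comm_def _ _ hab)⟩

lemma sub_spec {a b : α} (h : E.le a b) :
    E.D a (E.sub b a) ∧ E.add a (E.sub b a) = b := by
  have h' : ∃ c, E.D a c ∧ E.add a c = b := h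
  rw [EffectAlgebra.sub, dif_pos h']
  exact h'.choose_spec

lemma sub_unique {a b c : α} (hD : E.D a c) (h : E.add a c = b) : E.sub b a = c := by
  have hle : E.le a b := ⟨c, hD, h⟩
  have hs := E.sub_spec hle
  exact E.cancel hs.1 hD (by rw [hs.2, h])

lemma add_sub_cancel {a c : α} (hD : E.D a c) : E.sub (E.add a c) a = c :=
  E.sub_unique hD rfl

end EffectAlgebra



namespace EffectAlgebra

/-- Sorted-from: list of pairs forming a chain starting at `t`. -/
def srtFrom (E : EffectAlgebra α) : α → List (α × α) → Prop
  | _, [] => True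
  | t, (a, b) :: l => E.le t a ∧ E.le a b ∧ E.srtFrom b l

lemma srtFrom_mono {E : EffectAlgebra α} {t t' : α} (h : E.le t' t) :
    ∀ {l : List (α × α)}, E.srtFrom t l → E.srtFrom t' l
  | [], _ => trivial
  | (a, b) :: l, ⟨h1, h2, h3⟩ => ⟨E.le_trans h h1, h2, h3⟩

end EffectAlgebra

/-- Bundled context for the main theorem. -/
structure MVCtx (M : Type*) (β : Type*) [BooleanAlgebra β] where
  E : EffectAlgebra M
  sup : M → M → M
  inf : M → M → M
  hsup : ∀ a b : M, E.le a (sup a b) ∧ E.le b (sup a b) ∧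
      ∀ c, E.le a c → E.le b c → E.le (sup a b) c
  hinf : ∀ a b : M, E.le (inf a b) a ∧ E.le (inf a b) b ∧
      ∀ c, E.le c a → E.le c b → E.le c (inf a b)
  e : M → β
  hinj : Function.Injective e
  hezero : e E.zero = ⊥
  heone : e E.one = ⊤
  heinf : ∀ a b : M, e (inf a b) = e a ⊓ e b
  hesup : ∀ a b : M, e (sup a b) = e a ⊔ e b
  hgen : ∀ S : Set β, Set.range e ⊆ S → (∀ a ∈ S, aᶜ ∈ S) →
      (∀ a ∈ S, ∀ b ∈ S, a ⊓ b ∈ S) → (∀ a ∈ S, ∀ b ∈ S, a ⊔ b ∈ S) → S = Set.univ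
  φ : β → M
  hφadd : ∀ u v : β, u ⊓ v = ⊥ → E.D (φ u) (φ v) ∧ φ (u ⊔ v) = E.add (φ u) (φ v)
  hφfix : ∀ m : M, φ (e m) = m

namespace MVCtx

variable {M : Type*} {β : Type*} [BooleanAlgebra β] (C : MVCtx M β)

lemma le_of_e_le {a b : M} (h : C.e a ≤ C.e b) : C.E.le a b := by
  have : C.e (C.inf a b) = C.e a := by rw [C.heinf, _root_.inf_eq_left.2 h]
  have h2 := C.hinj this
  have h3 := (C.hinf a b).2.1
  rw [h2] at h3
  exact h3

lemma inf_eq_left {a b : M} (h : C.E.le a b) : C.inf a b = a :=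
  C.E.le_antisymm (C.hinf a b).1 ((C.hinf a b).2.2 a (C.E.le_refl a) h)

lemma sup_eq_right {a b : M} (h : C.E.le a b) : C.sup a b = b :=
  C.E.le_antisymm ((C.hsup a b).2.2 b h (C.E.le_refl b)) (C.hsup a b).2.1

lemma e_mono {a b : M} (h : C.E.le a b) : C.e a ≤ C.e b := by
  have : C.e (C.inf a b) = C.e a := by rw [C.inf_eq_left h]
  rw [C.heinf] at this
  exact _root_.inf_eq_left.1 this

lemma phi_bot : C.φ ⊥ = C.E.zero := by
  rw [← C.hezero, C.hφfix]

lemma phi_add {u v : β} (h : u ⊓ v = ⊥) :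
    C.E.D (C.φ u) (C.φ v) ∧ C.φ (u ⊔ v) = C.E.add (C.φ u) (C.φ v) := C.hφadd u v h

lemma phi_mono {u v : β} (h : u ≤ v) : C.E.le (C.φ u) (C.φ v) := by
  have hd : u ⊓ (v \ u) = ⊥ := by
    rw [inf_comm]; exact disjoint_sdiff_self_left.eq_bot
  have hj : u ⊔ (v \ u) = v := by
    rw [sup_comm, sdiff_sup_cancel h]
  obtain ⟨hD, hadd⟩ := C.hφadd _ _ hd
  exact ⟨C.φ (v \ u), hD, by rw [← hadd, hj]⟩

lemma phi_zero_of_bot {u : β} (h : u = ⊥) : C.φ u = C.E.zero := by rw [h, C.phi_bot]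

/-- strips -/
def str (a b : M) : β := C.e b ⊓ (C.e a)ᶜ

lemma str_inf (a b c d : M) :
    C.str a b ⊓ C.str c d = C.str (C.sup a c) (C.inf b d) := by
  simp only [str, C.heinf, C.hesup, compl_sup]
  ac_rfl

lemma str_norm (a b : M) : C.str a b = C.str a (C.sup a b) := by
  simp only [str, C.hesup, inf_sup_right]
  simp

lemma str_norm' {a b : M} (hb : C.E.le b (C.E.one)) : C.str a b = C.str (C.inf a b) b := by
  simp only [str, C.heinf, compl_inf, inf_sup_left]
  simp

lemma str_zero (b : M) : C.str C.E.zero b = C.e b := by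
  simp [str, C.hezero]

lemma e_disj_str (a b : M) : C.e a ⊓ C.str a b = ⊥ := by
  simp only [str]
  rw [inf_comm, inf_assoc]
  simp

lemma e_sup_str {a b : M} (h : C.E.le a b) : C.e a ⊔ C.str a b = C.e b := by
  rw [str, sup_inf_left]
  have : C.e a ⊔ C.e b = C.e b := _root_.sup_eq_right.2 (C.e_mono h)
  rw [this]
  simp

lemma phi_str {a b : M} (h : C.E.le a b) :
    C.E.D a (C.φ (C.str a b)) ∧ C.E.add a (C.φ (C.str a b)) = b := by
  obtain ⟨hD, hadd⟩ := C.hφadd _ _ (C.e_disj_str a b)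
  rw [C.e_sup_str h, C.hφfix, C.hφfix] at *
  exact ⟨hD, hadd.symm⟩

lemma phi_str_sub {a b : M} (h : C.E.le a b) : C.φ (C.str a b) = C.E.sub b a :=
  (C.E.sub_unique (C.phi_str h).1 (C.phi_str h).2).symm

lemma str_le_str {a b c d : M} (hac : C.E.le a c) (hdb : C.E.le d b) :
    C.str c d ≤ C.str a b :=
  inf_le_inf (C.e_mono hdb) (compl_le_compl (C.e_mono hac))

lemma str_bot_of_le {a b : M} (h : C.E.le b a) : C.str a b = ⊥ := by
  have hle := C.e_mono h
  rw [str]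
  refine le_bot_iff.1 ?_
  calc C.e b ⊓ (C.e a)ᶜ ≤ C.e a ⊓ (C.e a)ᶜ := inf_le_inf_right _ hle
    _ = ⊥ := by simp

end MVCtx


namespace MVCtx

variable {M : Type*} {β : Type*} [BooleanAlgebra β] (C : MVCtx M β)

/-- join of strips of a list -/
def js (l : List (M × M)) : β := l.foldr (fun pq r => C.str pq.1 pq.2 ⊔ r) ⊥

@[simp] lemma js_nil : C.js ([] : List (M × M)) = ⊥ := rfl

@[simp] lemma js_cons (p : M × M) (l : List (M × M)) :
    C.js (p :: l) = C.str p.1 p.2 ⊔ C.js l := rfl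

lemma js_append (l₁ l₂ : List (M × M)) : C.js (l₁ ++ l₂) = C.js l₁ ⊔ C.js l₂ := by
  induction l₁ with
  | nil => simp
  | cons p l ih => simp [ih, sup_assoc]

lemma srtFrom_bounds {t : M} : ∀ {l : List (M × M)}, C.E.srtFrom t l →
    ∀ p ∈ l, C.E.le t p.1 ∧ C.E.le p.1 p.2
  | [], _ => by simp
  | (a, b) :: l, ⟨h1, h2, h3⟩ => by
    intro p hp
    rcases List.mem_cons.1 hp with h | h
    · subst h; exact ⟨h1, h2⟩
    · have := srtFrom_bounds h3 p h
      exact ⟨C.E.le_trans h1 (C.E.le_trans h2 this.1), this.2⟩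

lemma str_disj_js {a b : M} : ∀ {l : List (M × M)}, C.E.srtFrom b l →
    C.str a b ⊓ C.js l = ⊥
  | [], _ => by simp
  | (c, d) :: l, ⟨h1, h2, h3⟩ => by
    rw [js_cons, inf_sup_left]
    have e1 : C.str a b ⊓ C.str c d = ⊥ := by
      refine le_bot_iff.1 ?_
      calc C.str a b ⊓ C.str c d ≤ C.e b ⊓ (C.e c)ᶜ :=
            inf_le_inf inf_le_left inf_le_right
        _ ≤ C.e c ⊓ (C.e c)ᶜ := inf_le_inf_right _ (C.e_mono h1)
        _ = ⊥ := by simp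
    have e2 : C.str a b ⊓ C.js l = ⊥ :=
      str_disj_js (EffectAlgebra.srtFrom_mono (C.E.le_trans h1 h2) h3)
    rw [e1, e2, sup_idem]

lemma js_le_str {a b : M} {l : List (M × M)} (hs : C.E.srtFrom a l)
    (hub : ∀ p ∈ l, C.E.le p.2 b) : C.js l ≤ C.str a b := by
  induction l with
  | nil => simp
  | cons p l ih =>
    obtain ⟨h1, h2, h3⟩ := hs
    rw [js_cons]
    refine sup_le (C.str_le_str h1 (hub p (by simp))) ?_
    have : C.E.srtFrom a l := EffectAlgebra.srtFrom_mono (C.E.le_trans h1 h2) h3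
    exact ih this (fun q hq => hub q (List.mem_cons_of_mem _ hq))

lemma srtFrom_append {t s : M} {l₁ l₂ : List (M × M)} (hts : C.E.le t s)
    (h1 : C.E.srtFrom t l₁) (h2 : C.E.srtFrom s l₂)
    (hub : ∀ p ∈ l₁, C.E.le p.2 s) : C.E.srtFrom t (l₁ ++ l₂) := by
  induction l₁ generalizing t with
  | nil => exact EffectAlgebra.srtFrom_mono hts h2
  | cons p l ih =>
    obtain ⟨ha, hb, hc⟩ := h1
    exact ⟨ha, hb, ih (hub p (by simp)) hc (fun q hq => hub q (List.mem_cons_of_mem _ hq))⟩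

/-- complement transform -/
def compAux : M → List (M × M) → List (M × M)
  | t, [] => [(t, C.E.one)]
  | t, (a, b) :: l => (t, a) :: compAux b l

lemma compAux_srt {z t : M} (hz : C.E.le z t) :
    ∀ {l : List (M × M)}, C.E.srtFrom t l → C.E.srtFrom z (C.compAux t l)
  | [], _ => ⟨hz, C.E.le_one t, trivial⟩
  | (a, b) :: l, ⟨h1, h2, h3⟩ => ⟨hz, h1, compAux_srt h2 h3⟩

lemma compAux_compl {t : M} : ∀ {l : List (M × M)}, C.E.srtFrom t l →
    (C.e t ⊔ C.js l)ᶜ = C.js (C.compAux t l)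
  | [], _ => by
    simp [compAux, str, C.heone]
  | (a, b) :: l, ⟨h1, h2, h3⟩ => by
    have ih := compAux_compl (t := b) h3
    have hab : C.e a ≤ C.e b := C.e_mono h2
    have hdisj : C.str t a ⊓ C.js l = ⊥ :=
      C.str_disj_js (EffectAlgebra.srtFrom_mono h2 h3)
    have hTB : (C.e t)ᶜ ⊓ (C.e b)ᶜ = (C.e b)ᶜ :=
      _root_.inf_eq_right.2 (compl_le_compl (C.e_mono (C.E.le_trans h1 h2)))
    have hSL : C.str t a ⊓ (C.js l)ᶜ = C.str t a :=
      _root_.inf_eq_left.2 (le_compl_iff_disjoint_right.2 (disjoint_iff.2 hdisj))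
    show (C.e t ⊔ (C.str a b ⊔ C.js l))ᶜ = C.str t a ⊔ C.js (C.compAux b l)
    calc (C.e t ⊔ (C.str a b ⊔ C.js l))ᶜ
        = ((C.e t)ᶜ ⊓ ((C.e b)ᶜ ⊔ C.e a)) ⊓ (C.js l)ᶜ := by
          simp only [compl_sup, str, compl_inf, compl_compl, inf_assoc]
      _ = (((C.e t)ᶜ ⊓ (C.e b)ᶜ) ⊔ ((C.e t)ᶜ ⊓ C.e a)) ⊓ (C.js l)ᶜ := by rw [inf_sup_left]
      _ = ((C.e b)ᶜ ⊔ C.str t a) ⊓ (C.js l)ᶜ := by rw [hTB, str, inf_comm ((C.e t)ᶜ) (C.e a)]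
      _ = ((C.e b)ᶜ ⊓ (C.js l)ᶜ) ⊔ (C.str t a ⊓ (C.js l)ᶜ) := by rw [inf_sup_right]
      _ = (C.e b ⊔ C.js l)ᶜ ⊔ C.str t a := by rw [hSL, compl_sup]
      _ = C.str t a ⊔ C.js (C.compAux b l) := by rw [ih]; exact sup_comm _ _

end MVCtx


namespace MVCtx

variable {M : Type*} {β : Type*} [BooleanAlgebra β] (C : MVCtx M β)

lemma le_sup_l (a b : M) : C.E.le a (C.sup a b) := (C.hsup a b).1
lemma le_sup_r (a b : M) : C.E.le b (C.sup a b) := (C.hsup a b).2.1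
lemma sup_le' {a b c : M} (h1 : C.E.le a c) (h2 : C.E.le b c) : C.E.le (C.sup a b) c :=
  (C.hsup a b).2.2 c h1 h2
lemma inf_le_l (a b : M) : C.E.le (C.inf a b) a := (C.hinf a b).1
lemma inf_le_r (a b : M) : C.E.le (C.inf a b) b := (C.hinf a b).2.1
lemma le_inf' {a b c : M} (h1 : C.E.le c a) (h2 : C.E.le c b) : C.E.le c (C.inf a b) :=
  (C.hinf a b).2.2 c h1 h2

lemma sup_mono' {a b c d : M} (h1 : C.E.le a c) (h2 : C.E.le b d) :
    C.E.le (C.sup a b) (C.sup c d) :=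
  C.sup_le' (C.E.le_trans h1 (C.le_sup_l c d)) (C.E.le_trans h2 (C.le_sup_r c d))

lemma inf_mono' {a b c d : M} (h1 : C.E.le a c) (h2 : C.E.le b d) :
    C.E.le (C.inf a b) (C.inf c d) :=
  C.le_inf' (C.E.le_trans (C.inf_le_l a b) h1) (C.E.le_trans (C.inf_le_r a b) h2)

lemma sup_zero (a : M) : C.sup C.E.zero a = a := C.sup_eq_right (C.E.zero_le a)

lemma str_clip {p q : M} (r : M) (h : C.E.le q r) : C.str p q = C.str (C.inf p r) q := by
  have h1 : C.e q ⊓ (C.e r)ᶜ = ⊥ := by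
    refine le_bot_iff.1 ?_
    calc C.e q ⊓ (C.e r)ᶜ ≤ C.e r ⊓ (C.e r)ᶜ := inf_le_inf_right _ (C.e_mono h)
      _ = ⊥ := by simp
  rw [str, str, C.heinf, compl_inf, inf_sup_left, h1, sup_bot_eq]

/-- windowed meet transform -/
def wAux (a b : M) (l : List (M × M)) : List (M × M) :=
  l.map (fun p => (C.inf (C.sup p.1 a) b,
    C.sup (C.inf (C.sup p.1 a) b) (C.inf p.2 b)))

lemma str_meet_str (u v a b : M) :
    C.str u v ⊓ C.str a b =
      C.str (C.inf (C.sup u a) b) (C.sup (C.inf (C.sup u a) b) (C.inf v b)) := by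
  rw [C.str_inf, C.str_clip b (C.inf_le_r v b), ← C.str_norm]

lemma js_inf_str (a b : M) : ∀ (l : List (M × M)),
    C.js l ⊓ C.str a b = C.js (C.wAux a b l)
  | [] => by simp [wAux]
  | p :: l => by
    rw [js_cons, inf_sup_right, js_inf_str a b l, C.str_meet_str]
    rfl

lemma wAux_ub (a b : M) (l : List (M × M)) :
    ∀ p ∈ C.wAux a b l, C.E.le p.2 b := by
  intro p hp
  simp only [wAux, List.mem_map] at hp
  obtain ⟨q, _, rfl⟩ := hp
  exact C.sup_le' (C.inf_le_r _ _) (C.inf_le_r _ _)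

lemma wAux_srt {a b t : M} : ∀ {l : List (M × M)}, C.E.srtFrom t l →
    C.E.srtFrom (C.inf (C.sup t a) b) (C.wAux a b l)
  | [], _ => trivial
  | (u, v) :: l, ⟨h1, h2, h3⟩ => by
    refine ⟨C.inf_mono' (C.sup_mono' h1 (C.E.le_refl a)) (C.E.le_refl b),
      C.le_sup_l _ _, ?_⟩
    have ih := wAux_srt (a := a) (b := b) h3
    refine EffectAlgebra.srtFrom_mono ?_ ih
    refine C.sup_le' (C.inf_mono' (C.sup_mono' h2 (C.E.le_refl a)) (C.E.le_refl b)) ?_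
    exact C.le_inf' (C.E.le_trans (C.inf_le_l v b) (C.le_sup_l v a)) (C.inf_le_r v b)

/-- chain representation -/
def HasRep (u : β) : Prop := ∃ l, C.E.srtFrom C.E.zero l ∧ C.js l = u

lemma hasRep_e (m : M) : C.HasRep (C.e m) :=
  ⟨[(C.E.zero, m)], ⟨C.E.le_refl _, C.E.zero_le m, trivial⟩, by simp [C.str_zero]⟩

lemma hasRep_compl {u : β} (h : C.HasRep u) : C.HasRep uᶜ := by
  obtain ⟨l, hs, rfl⟩ := h
  refine ⟨C.compAux C.E.zero l, C.compAux_srt (C.E.le_refl _) hs, ?_⟩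
  rw [← C.compAux_compl hs, C.hezero, bot_sup_eq]

lemma meet_rep {lu : List (M × M)} (hu : C.E.srtFrom C.E.zero lu) :
    ∀ {t : M} {l : List (M × M)}, C.E.srtFrom t l →
    ∃ l', C.E.srtFrom t l' ∧ C.js l' = C.js lu ⊓ C.js l := by
  intro t l
  induction l generalizing t with
  | nil => exact fun _ => ⟨[], trivial, by simp⟩
  | cons p l ih =>
    obtain ⟨a, b⟩ := p
    rintro ⟨h1, h2, h3⟩
    obtain ⟨l₂, hs₂, hjs₂⟩ := ih h3
    refine ⟨C.wAux a b lu ++ l₂, ?_, ?_⟩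
    · refine C.srtFrom_append (C.E.le_trans h1 h2) ?_ hs₂ (C.wAux_ub a b lu)
      refine EffectAlgebra.srtFrom_mono ?_ (C.wAux_srt hu)
      exact C.le_inf' (C.E.le_trans h1 (C.le_sup_r C.E.zero a)) (C.E.le_trans h1 h2)
    · rw [C.js_append, ← C.js_inf_str, hjs₂, js_cons, inf_sup_left]

lemma hasRep_univ (u : β) : C.HasRep u := by
  have := C.hgen {w | C.HasRep w} ?_ ?_ ?_ ?_
  · exact (Set.eq_univ_iff_forall.1 this) u
  · rintro w ⟨m, rfl⟩; exact C.hasRep_e m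
  · exact fun w hw => C.hasRep_compl hw
  · rintro w ⟨lw, hsw, rfl⟩ x ⟨lx, hsx, rfl⟩
    obtain ⟨l', h1, h2⟩ := C.meet_rep hsw hsx
    exact ⟨l', h1, h2⟩
  · rintro w hw x hx
    have h1 := C.hasRep_compl hw
    have h2 := C.hasRep_compl hx
    obtain ⟨lw, hsw, hw2⟩ := h1
    obtain ⟨lx, hsx, hx2⟩ := h2
    obtain ⟨l', hs', hj'⟩ := C.meet_rep hsw hsx
    have := C.hasRep_compl ⟨l', hs', hj'⟩
    rw [hw2, hx2, ← compl_sup, compl_compl] at this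
    exact this

end MVCtx


namespace MVCtx

variable {M : Type*} {β : Type*} [BooleanAlgebra β] (C : MVCtx M β)

lemma phi_split {x w₁ w₂ : β} (h12 : w₁ ≤ w₂) :
    C.E.D (C.φ (x ⊓ w₁)) (C.φ (x ⊓ (w₂ ⊓ w₁ᶜ))) ∧
      C.φ (x ⊓ w₂) = C.E.add (C.φ (x ⊓ w₁)) (C.φ (x ⊓ (w₂ ⊓ w₁ᶜ))) := by
  have hdisj : (x ⊓ w₁) ⊓ (x ⊓ (w₂ ⊓ w₁ᶜ)) = ⊥ := by
    refine le_bot_iff.1 ?_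
    calc (x ⊓ w₁) ⊓ (x ⊓ (w₂ ⊓ w₁ᶜ)) ≤ w₁ ⊓ (w₂ ⊓ w₁ᶜ) :=
          inf_le_inf inf_le_right inf_le_right
      _ ≤ w₁ ⊓ w₁ᶜ := inf_le_inf_left _ inf_le_right
      _ = ⊥ := by simp
  obtain ⟨hD, hadd⟩ := C.hφadd _ _ hdisj
  have hj : (x ⊓ w₁) ⊔ (x ⊓ (w₂ ⊓ w₁ᶜ)) = x ⊓ w₂ := by
    rw [← inf_sup_left]
    congr 1
    rw [sup_inf_left]
    have h1 : w₁ ⊔ w₂ = w₂ := _root_.sup_eq_right.2 h12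
    have h2 : w₁ ⊔ w₁ᶜ = ⊤ := sup_compl_eq_top
    rw [h1, h2, inf_top_eq]
  rw [hj] at hadd
  exact ⟨hD, hadd⟩

/-- split along `e (inf α b) ⊔ str α b = e b` -/
lemma phi_split_str (x : β) (α b : M) :
    C.E.D (C.φ (x ⊓ C.e (C.inf α b))) (C.φ (x ⊓ C.str α b)) ∧
      C.φ (x ⊓ C.e b) = C.E.add (C.φ (x ⊓ C.e (C.inf α b))) (C.φ (x ⊓ C.str α b)) := by
  have h12 : C.e (C.inf α b) ≤ C.e b := C.e_mono (C.inf_le_r α b)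
  have key : C.e b ⊓ (C.e (C.inf α b))ᶜ = C.str α b := by
    rw [C.heinf, compl_inf, inf_sup_left]
    have : C.e b ⊓ (C.e b)ᶜ = ⊥ := by simp
    rw [this, sup_bot_eq, str, inf_comm]
  have h := C.phi_split (x := x) h12
  rw [key] at h
  exact h

lemma exists_str_le {u : β} (h : u ≠ ⊥) :
    ∃ a b : M, C.E.le a b ∧ C.str a b ≠ ⊥ ∧ C.str a b ≤ u := by
  obtain ⟨l, hs, rfl⟩ := C.hasRep_univ u
  induction l with
  | nil => simp at h
  | cons p l ih =>
    obtain ⟨h1, h2, h3⟩ := hs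
    by_cases hp : C.str p.1 p.2 = ⊥
    · rw [js_cons, hp, bot_sup_eq] at h ⊢
      obtain ⟨a, b, hab, hne, hle⟩ := ih (EffectAlgebra.srtFrom_mono (C.E.le_trans h1 h2) h3) h
      exact ⟨a, b, hab, hne, hle⟩
    · exact ⟨p.1, p.2, h2, hp, by rw [js_cons]; exact le_sup_left⟩

lemma phi_str_ne_zero {a b : M} (hab : C.E.le a b) (h : C.str a b ≠ ⊥) :
    C.φ (C.str a b) ≠ C.E.zero := by
  intro h0
  obtain ⟨hD, hadd⟩ := C.phi_str hab
  rw [h0, C.E.add_zero] at hadd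
  apply h
  rw [← hadd]
  simp [str]

lemma le_of_phi_str_le {x y : β}
    (h : ∀ a b : M, C.E.le a b → C.E.le (C.φ (x ⊓ C.str a b)) (C.φ (y ⊓ C.str a b))) :
    x ≤ y := by
  by_contra hxy
  have hne : x ⊓ yᶜ ≠ ⊥ := by
    intro hb
    exact hxy (sdiff_eq_bot_iff.1 (by rw [sdiff_eq]; exact hb))
  obtain ⟨a, b, hab, hne', hle⟩ := C.exists_str_le hne
  have h1 : x ⊓ C.str a b = C.str a b :=
    _root_.inf_eq_right.2 (le_trans hle inf_le_left)
  have h2 : y ⊓ C.str a b = ⊥ := by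
    refine le_bot_iff.1 ?_
    calc y ⊓ C.str a b ≤ y ⊓ (x ⊓ yᶜ) := inf_le_inf_left _ hle
      _ ≤ y ⊓ yᶜ := inf_le_inf_left _ inf_le_right
      _ = ⊥ := by simp
  have := h a b hab
  rw [h1, h2, C.phi_bot] at this
  exact C.phi_str_ne_zero hab hne' (C.E.le_zero this)

lemma eq_of_phi_str_eq {x y : β}
    (h : ∀ a b : M, C.E.le a b → C.φ (x ⊓ C.str a b) = C.φ (y ⊓ C.str a b)) :
    x = y :=
  le_antisymm
    (C.le_of_phi_str_le (fun a b hab => (h a b hab) ▸ C.E.le_refl _))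
    (C.le_of_phi_str_le (fun a b hab => (h a b hab) ▸ C.E.le_refl _))

end MVCtx


namespace EffectAlgebra

variable {α : Type*} (E : EffectAlgebra α)

lemma sub_self (a : α) : E.sub a a = E.zero := E.sub_unique (E.D_zero_right a) (E.add_zero a)

lemma sub_le {a u p : α} (hap : E.D a p) (hau : E.le a u) (hu : E.le u (E.add a p)) :
    E.le (E.sub u a) p := by
  have hs := E.sub_spec hau
  exact E.cancel_le hs.1 hap (by rw [hs.2]; exact hu)

lemma sub_mono {a u v : α} (hau : E.le a u) (huv : E.le u v) (hav : E.le a v) :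
    E.le (E.sub u a) (E.sub v a) := by
  have hu := E.sub_spec hau
  have hv := E.sub_spec hav
  exact E.cancel_le hu.1 hv.1 (by rw [hu.2, hv.2]; exact huv)

end EffectAlgebra

namespace MVCtx

variable {M : Type*} {β : Type*} [BooleanAlgebra β] (C : MVCtx M β)

lemma inf_absorb {x y r : M} (h : C.E.le x y) : C.inf x (C.inf y r) = C.inf x r := by
  apply C.E.le_antisymm
  · exact C.le_inf' (C.inf_le_l _ _) (C.E.le_trans (C.inf_le_r _ _) (C.inf_le_r _ _))
  · exact C.le_inf' (C.inf_le_l _ _)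
      (C.le_inf' (C.E.le_trans (C.inf_le_l _ _) h) (C.inf_le_r _ _))

lemma sup_absorb {u a : M} (h : C.E.le a u) : C.sup u a = u :=
  C.E.le_antisymm (C.sup_le' (C.E.le_refl u) h) (C.le_sup_l u a)

/-- (M-1): translation distributes over inf -/
lemma add_inf {c p x z : M} (hcp : C.E.D c p) (hx : C.E.le x p) (hz : C.E.le z p) :
    C.inf (C.E.add c x) (C.E.add c z) = C.E.add c (C.inf x z) := by
  have hcx : C.E.D c x := C.E.D_mono_right hcp hx
  have hcz : C.E.D c z := C.E.D_mono_right hcp hz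
  have hcxz : C.E.D c (C.inf x z) :=
    C.E.D_mono_right hcp (C.E.le_trans (C.inf_le_l x z) hx)
  apply C.E.le_antisymm
  · set w := C.inf (C.E.add c x) (C.E.add c z) with hw
    have hcw : C.E.le c w :=
      C.le_inf' (C.E.le_add_left hcx) (C.E.le_add_left hcz)
    have hws := C.E.sub_spec hcw
    have h1 : C.E.le (C.E.sub w c) x :=
      C.E.cancel_le hws.1 hcx (by rw [hws.2]; exact C.inf_le_l _ _)
    have h2 : C.E.le (C.E.sub w c) z :=
      C.E.cancel_le hws.1 hcz (by rw [hws.2]; exact C.inf_le_r _ _)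
    have h3 : C.E.le (C.E.sub w c) (C.inf x z) := C.le_inf' h1 h2
    have := C.E.add_le_add_left h3 hcxz
    rw [hws.2] at this
    exact this
  · exact C.le_inf' (C.E.add_le_add_left (C.inf_le_l x z) hcx)
      (C.E.add_le_add_left (C.inf_le_r x z) hcz)

/-- (M-2): translation cancellation in subtraction -/
lemma add_sub_add {c x z : M} (hcx : C.E.D c x) (hz : C.E.le z x) :
    C.E.sub (C.E.add c x) (C.E.add c z) = C.E.sub x z := by
  have hzs := C.E.sub_spec hz
  have hcs : C.E.D c (C.E.add z (C.E.sub x z)) := by rw [hzs.2]; exact hcx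
  obtain ⟨hcz, hD, heq⟩ := C.E.assoc' hzs.1 hcs
  apply C.E.sub_unique hD
  rw [← heq, hzs.2]

/-- (T4): value of a strip piece is translation invariant -/
lemma str_transfer_val {a c p u v r : M} (hap : C.E.D a p) (hcp : C.E.D c p)
    (hau : C.E.le a u) (huv : C.E.le u v) (hv : C.E.le v (C.E.add a p)) (hr : C.E.le r p) :
    C.φ (C.str u v ⊓ C.str a (C.E.add a r)) =
      C.φ (C.str (C.E.add c (C.E.sub u a)) (C.E.add c (C.E.sub v a)) ⊓
        C.str c (C.E.add c r)) := by
  have hav : C.E.le a v := C.E.le_trans hau huv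
  set u₀ := C.E.sub u a with hu₀
  set v₀ := C.E.sub v a with hv₀
  have hu₀s := C.E.sub_spec hau
  have hv₀s := C.E.sub_spec hav
  have hv₀p : C.E.le v₀ p := C.E.sub_le hap hav hv
  have hu₀v₀ : C.E.le u₀ v₀ := C.E.sub_mono hau huv hav
  have hu₀p : C.E.le u₀ p := C.E.le_trans hu₀v₀ hv₀p
  -- generic computation of φ (str (w⊕x₀) (w⊕y₀) ⊓ str w (w⊕r))
  have key : ∀ w x₀ y₀ : M, C.E.D w p → C.E.le x₀ y₀ → C.E.le y₀ p →
      C.φ (C.str (C.E.add w x₀) (C.E.add w y₀) ⊓ C.str w (C.E.add w r)) =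
        C.E.sub (C.inf y₀ r) (C.inf x₀ r) := by
    intro w x₀ y₀ hwp hxy hyp
    have hxp : C.E.le x₀ p := C.E.le_trans hxy hyp
    have hwx : C.E.D w x₀ := C.E.D_mono_right hwp hxp
    have hyr : C.E.le (C.inf y₀ r) p := C.E.le_trans (C.inf_le_l _ _) hyp
    have e1 : C.str (C.E.add w x₀) (C.E.add w y₀) ⊓ C.str w (C.E.add w r) =
        C.str (C.E.add w x₀) (C.E.add w (C.inf y₀ r)) := by
      rw [C.str_inf, C.sup_absorb (C.E.le_add_left hwx), C.add_inf hwp hyp hr]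
    rw [e1, C.str_norm' (C.E.le_one _), C.phi_str_sub (C.inf_le_r _ _),
      C.add_inf hwp hxp hyr, C.inf_absorb hxy,
      C.add_sub_add (C.E.D_mono_right hwp hyr)
        (C.inf_mono' hxy (C.E.le_refl r))]
  rw [show C.str u v = C.str (C.E.add a u₀) (C.E.add a v₀) by rw [hu₀s.2, hv₀s.2]]
  rw [key a u₀ v₀ hap hu₀v₀ hv₀p, key c u₀ v₀ hcp hu₀v₀ hv₀p]

end MVCtx


namespace MVCtx

variable {M : Type*} {β : Type*} [BooleanAlgebra β] (C : MVCtx M β)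

/-- translation of a list of pairs from base `a` to base `c` -/
noncomputable def trAux (a c : M) (l : List (M × M)) : List (M × M) :=
  l.map (fun q => (C.E.add c (C.E.sub q.1 a), C.E.add c (C.E.sub q.2 a)))

lemma trAux_srt {a c p : M} (hap : C.E.D a p) (hcp : C.E.D c p) :
    ∀ {w : M} {l : List (M × M)}, C.E.le a w → C.E.srtFrom w l →
      (∀ q ∈ l, C.E.le q.2 (C.E.add a p)) →
      C.E.srtFrom (C.E.add c (C.E.sub w a)) (C.trAux a c l)
  | _, [], _, _, _ => trivial
  | w, (u, v) :: l, haw, ⟨h1, h2, h3⟩, hub => by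
    have hau : C.E.le a u := C.E.le_trans haw h1
    have hav : C.E.le a v := C.E.le_trans hau h2
    have hv : C.E.le v (C.E.add a p) := hub (u, v) (by simp)
    have hvp : C.E.le (C.E.sub v a) p := C.E.sub_le hap hav hv
    have hup : C.E.le (C.E.sub u a) p :=
      C.E.le_trans (C.E.sub_mono hau h2 hav) hvp
    have hwp : C.E.le (C.E.sub w a) p :=
      C.E.le_trans (C.E.sub_mono haw h1 hau) hup
    refine ⟨C.E.add_le_add_left (C.E.sub_mono haw h1 hau) (C.E.D_mono_right hcp hup),
      C.E.add_le_add_left (C.E.sub_mono hau h2 hav) (C.E.D_mono_right hcp hvp), ?_⟩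
    exact trAux_srt hap hcp hav h3 (fun q hq => hub q (List.mem_cons_of_mem _ hq))

lemma trAux_ub {a c p : M} (hap : C.E.D a p) (hcp : C.E.D c p)
    {l : List (M × M)} (hlb : ∀ q ∈ l, C.E.le a q.1 ∧ C.E.le q.1 q.2)
    (hub : ∀ q ∈ l, C.E.le q.2 (C.E.add a p)) :
    ∀ q ∈ C.trAux a c l, C.E.le q.2 (C.E.add c p) := by
  intro q hq
  simp only [trAux, List.mem_map] at hq
  obtain ⟨q', hq', rfl⟩ := hq
  have hav : C.E.le a q'.2 := C.E.le_trans (hlb q' hq').1 (hlb q' hq').2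
  exact C.E.add_le_add_left (C.E.sub_le hap hav (hub q' hq')) hcp

/-- (T3): value spec of translated join -/
lemma js_transfer_val {a c p : M} (hap : C.E.D a p) (hcp : C.E.D c p) :
    ∀ {w : M} {l : List (M × M)}, C.E.le a w → C.E.srtFrom w l →
      (∀ q ∈ l, C.E.le q.2 (C.E.add a p)) → ∀ r, C.E.le r p →
      C.φ (C.js (C.trAux a c l) ⊓ C.str c (C.E.add c r)) =
        C.φ (C.js l ⊓ C.str a (C.E.add a r))
  | _, [], _, _, _, r, _ => by simp [trAux, C.phi_bot]
  | w, (u, v) :: l, haw, ⟨h1, h2, h3⟩, hub, r, hr => by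
    have hau : C.E.le a u := C.E.le_trans haw h1
    have hav : C.E.le a v := C.E.le_trans hau h2
    have hv : C.E.le v (C.E.add a p) := hub (u, v) (by simp)
    have ih := js_transfer_val hap hcp hav h3
      (fun q hq => hub q (List.mem_cons_of_mem _ hq)) r hr
    have hd1 : C.str u v ⊓ C.js l = ⊥ := C.str_disj_js h3
    have hd2 : C.str (C.E.add c (C.E.sub u a)) (C.E.add c (C.E.sub v a)) ⊓
        C.js (C.trAux a c l) = ⊥ :=
      C.str_disj_js (C.trAux_srt hap hcp hav h3
        (fun q hq => hub q (List.mem_cons_of_mem _ hq)))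
    have hD1 : (C.str u v ⊓ C.str a (C.E.add a r)) ⊓
        (C.js l ⊓ C.str a (C.E.add a r)) = ⊥ := by
      refine le_bot_iff.1 ?_
      calc _ ≤ C.str u v ⊓ C.js l := inf_le_inf inf_le_left inf_le_left
        _ = ⊥ := hd1
    have hD2 : (C.str (C.E.add c (C.E.sub u a)) (C.E.add c (C.E.sub v a)) ⊓
        C.str c (C.E.add c r)) ⊓ (C.js (C.trAux a c l) ⊓ C.str c (C.E.add c r)) = ⊥ := by
      refine le_bot_iff.1 ?_
      calc _ ≤ C.str (C.E.add c (C.E.sub u a)) (C.E.add c (C.E.sub v a)) ⊓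
            C.js (C.trAux a c l) := inf_le_inf inf_le_left inf_le_left
        _ = ⊥ := hd2
    have lhs : C.js (C.trAux a c ((u, v) :: l)) ⊓ C.str c (C.E.add c r) =
        (C.str (C.E.add c (C.E.sub u a)) (C.E.add c (C.E.sub v a)) ⊓
          C.str c (C.E.add c r)) ⊔ (C.js (C.trAux a c l) ⊓ C.str c (C.E.add c r)) := by
      rw [show C.trAux a c ((u, v) :: l) =
        (C.E.add c (C.E.sub u a), C.E.add c (C.E.sub v a)) :: C.trAux a c l from rfl,
        js_cons, inf_sup_right]
    have rhs : C.js ((u, v) :: l) ⊓ C.str a (C.E.add a r) =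
        (C.str u v ⊓ C.str a (C.E.add a r)) ⊔ (C.js l ⊓ C.str a (C.E.add a r)) := by
      rw [js_cons, inf_sup_right]
    rw [lhs, rhs, (C.hφadd _ _ hD2).2, (C.hφadd _ _ hD1).2, ih,
      ← C.str_transfer_val hap hcp hau h2 hv hr]

/-- reduction of `e`-values to initial strip values below a strip -/
lemma e_meet_of_le_str {c p : M} {y : β} (hy : y ≤ C.str c (C.E.add c p)) (m : M) :
    y ⊓ C.e m = y ⊓ C.str c (C.sup c (C.inf m (C.E.add c p))) := by
  have hy1 : y ≤ C.e (C.E.add c p) := le_trans hy inf_le_left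
  have hy2 : y ≤ (C.e c)ᶜ := le_trans hy inf_le_right
  have step1 : y ⊓ C.e m = y ⊓ C.e (C.inf m (C.E.add c p)) := by
    rw [C.heinf, ← inf_assoc, inf_right_comm]
    rw [_root_.inf_eq_left.2 hy1]
  have step2 : y ⊓ C.str c (C.sup c (C.inf m (C.E.add c p))) =
      y ⊓ C.e (C.sup c (C.inf m (C.E.add c p))) := by
    rw [str, ← inf_assoc, inf_right_comm, _root_.inf_eq_left.2 hy2, inf_comm]
  rw [step1, step2, C.hesup, inf_sup_left]
  have : y ⊓ C.e c = ⊥ := by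
    refine le_bot_iff.1 ?_
    calc y ⊓ C.e c ≤ (C.e c)ᶜ ⊓ C.e c := inf_le_inf_right _ hy2
      _ = ⊥ := by simp
  rw [this, bot_sup_eq]

/-- window parameter -/
noncomputable def rWin (c p m : M) : M := C.E.sub (C.sup c (C.inf m (C.E.add c p))) c

lemma rWin_spec (c p m : M) (hcp : C.E.D c p) :
    C.E.le (C.rWin c p m) p ∧
      C.E.add c (C.rWin c p m) = C.sup c (C.inf m (C.E.add c p)) := by
  have hle : C.E.le c (C.sup c (C.inf m (C.E.add c p))) := C.le_sup_l _ _
  have hub : C.E.le (C.sup c (C.inf m (C.E.add c p))) (C.E.add c p) :=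
    C.sup_le' (C.E.le_add_left hcp) (C.inf_le_r _ _)
  exact ⟨C.E.sub_le hcp hle hub, (C.E.sub_spec hle).2⟩

lemma rWin_mono (c p : M) (hcp : C.E.D c p) {m m' : M} (h : C.E.le m m') :
    C.E.le (C.rWin c p m) (C.rWin c p m') := by
  have h1 := (C.rWin_spec c p m hcp).2
  have h2 := (C.rWin_spec c p m' hcp).2
  have hmm : C.E.le (C.sup c (C.inf m (C.E.add c p)))
      (C.sup c (C.inf m' (C.E.add c p))) :=
    C.sup_mono' (C.E.le_refl c) (C.inf_mono' h (C.E.le_refl _))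
  have hD1 : C.E.D c (C.rWin c p m) := C.E.D_mono_right hcp (C.rWin_spec c p m hcp).1
  have hD2 : C.E.D c (C.rWin c p m') := C.E.D_mono_right hcp (C.rWin_spec c p m' hcp).1
  exact C.E.cancel_le hD1 hD2 (by rw [h1, h2]; exact hmm)

/-- e-value of an element below a strip, via the spec values -/
lemma e_val_eq {c p : M} (hcp : C.E.D c p) {y : β} (hy : y ≤ C.str c (C.E.add c p))
    (m : M) : y ⊓ C.e m = y ⊓ C.str c (C.E.add c (C.rWin c p m)) := by
  rw [(C.rWin_spec c p m hcp).2]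
  exact C.e_meet_of_le_str hy m

end MVCtx


namespace MVCtx

variable {M : Type*} {β : Type*} [BooleanAlgebra β] (C : MVCtx M β)

lemma meet_str_eq_meet_e {a q : M} {x : β} (hx : x ≤ (C.e a)ᶜ) :
    x ⊓ C.str a q = x ⊓ C.e q := by
  rw [str, ← inf_assoc, inf_right_comm, _root_.inf_eq_left.2 hx]

lemma transfer_exists {a c p : M} (hap : C.E.D a p) (hcp : C.E.D c p)
    {x : β} (hx : x ≤ C.str a (C.E.add a p)) :
    ∃ y, y ≤ C.str c (C.E.add c p) ∧ ∀ r, C.E.le r p →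
      C.φ (y ⊓ C.str c (C.E.add c r)) = C.φ (x ⊓ C.str a (C.E.add a r)) := by
  obtain ⟨l₀, hs₀, hx₀⟩ := C.hasRep_univ x
  set l := C.wAux a (C.E.add a p) l₀ with hl
  have hjl : C.js l = x := by
    rw [hl, ← C.js_inf_str, hx₀, _root_.inf_eq_left.2 hx]
  have hsl : C.E.srtFrom a l := by
    have := C.wAux_srt (a := a) (b := C.E.add a p) hs₀
    rwa [C.sup_zero, C.inf_eq_left (C.E.le_add_left hap)] at this
  have hubl : ∀ q ∈ l, C.E.le q.2 (C.E.add a p) := C.wAux_ub _ _ _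
  have hlbl : ∀ q ∈ l, C.E.le a q.1 ∧ C.E.le q.1 q.2 := C.srtFrom_bounds hsl
  refine ⟨C.js (C.trAux a c l), ?_, ?_⟩
  · refine C.js_le_str ?_ (C.trAux_ub hap hcp hlbl hubl)
    have := C.trAux_srt hap hcp (C.E.le_refl a) hsl hubl
    rwa [C.E.sub_self, C.E.add_zero] at this
  · intro r hr
    rw [← hjl]
    exact C.js_transfer_val hap hcp (C.E.le_refl a) hsl hubl r hr

lemma transfer_unique {c p : M} (hcp : C.E.D c p) {y₁ y₂ : β}
    (h₁ : y₁ ≤ C.str c (C.E.add c p)) (h₂ : y₂ ≤ C.str c (C.E.add c p))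
    (h : ∀ r, C.E.le r p →
      C.φ (y₁ ⊓ C.str c (C.E.add c r)) = C.φ (y₂ ⊓ C.str c (C.E.add c r))) :
    y₁ = y₂ := by
  have hev : ∀ m, C.φ (y₁ ⊓ C.e m) = C.φ (y₂ ⊓ C.e m) := by
    intro m
    rw [C.e_val_eq hcp h₁ m, C.e_val_eq hcp h₂ m]
    exact h _ (C.rWin_spec c p m hcp).1
  apply C.eq_of_phi_str_eq
  intro α b _
  obtain ⟨d1, e1⟩ := C.phi_split_str y₁ α b
  obtain ⟨d2, e2⟩ := C.phi_split_str y₂ α b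
  rw [hev (C.inf α b)] at e1 d1
  rw [hev b] at e1
  exact C.E.cancel d1 d2 (e1.symm.trans e2)

lemma transfer_mono {a c p : M} (hap : C.E.D a p) (hcp : C.E.D c p)
    {x₁ x₂ y₁ y₂ : β}
    (hx₁ : x₁ ≤ C.str a (C.E.add a p)) (hx₂ : x₂ ≤ C.str a (C.E.add a p))
    (hy₁ : y₁ ≤ C.str c (C.E.add c p)) (hy₂ : y₂ ≤ C.str c (C.E.add c p))
    (s₁ : ∀ r, C.E.le r p →
      C.φ (y₁ ⊓ C.str c (C.E.add c r)) = C.φ (x₁ ⊓ C.str a (C.E.add a r)))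
    (s₂ : ∀ r, C.E.le r p →
      C.φ (y₂ ⊓ C.str c (C.E.add c r)) = C.φ (x₂ ⊓ C.str a (C.E.add a r)))
    (hx : x₁ ≤ x₂) : y₁ ≤ y₂ := by
  have hxc₁ : x₁ ≤ (C.e a)ᶜ := le_trans hx₁ inf_le_right
  have hxc₂ : x₂ ≤ (C.e a)ᶜ := le_trans hx₂ inf_le_right
  have KV : ∀ (x y : β), x ≤ (C.e a)ᶜ →
      (∀ r, C.E.le r p →
        C.φ (y ⊓ C.str c (C.E.add c r)) = C.φ (x ⊓ C.str a (C.E.add a r))) →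
      y ≤ C.str c (C.E.add c p) →
      ∀ m, C.φ (y ⊓ C.e m) = C.φ (x ⊓ C.e (C.E.add a (C.rWin c p m))) := by
    intro x y hxc s hy m
    rw [C.e_val_eq hcp hy m, s _ (C.rWin_spec c p m hcp).1, C.meet_str_eq_meet_e hxc]
  apply C.le_of_phi_str_le
  intro α b _
  set γ := C.inf α b with hγ
  set r₁ := C.rWin c p γ with hr₁
  set r₂ := C.rWin c p b with hr₂
  have hr12 : C.E.le r₁ r₂ := C.rWin_mono c p hcp (C.inf_le_r α b)
  have hr₂p : C.E.le r₂ p := (C.rWin_spec c p b hcp).1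
  have hAB : C.e (C.E.add a r₁) ≤ C.e (C.E.add a r₂) :=
    C.e_mono (C.E.add_le_add_left hr12 (C.E.D_mono_right hap hr₂p))
  have key : ∀ (x y : β), x ≤ (C.e a)ᶜ →
      (∀ r, C.E.le r p →
        C.φ (y ⊓ C.str c (C.E.add c r)) = C.φ (x ⊓ C.str a (C.E.add a r))) →
      y ≤ C.str c (C.E.add c p) →
      C.φ (y ⊓ C.str α b) =
        C.φ (x ⊓ (C.e (C.E.add a r₂) ⊓ (C.e (C.E.add a r₁))ᶜ)) := by
    intro x y hxc s hy
    obtain ⟨dy, ey⟩ := C.phi_split_str y α b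
    obtain ⟨dx, ex⟩ := C.phi_split (x := x) hAB
    rw [KV x y hxc s hy b] at ey
    rw [KV x y hxc s hy γ] at ey dy
    exact C.E.cancel dy dx (ey.symm.trans ex)
  rw [key x₁ y₁ hxc₁ s₁ hy₁, key x₂ y₂ hxc₂ s₂ hy₂]
  exact C.phi_mono (inf_le_inf_right _ hx)

end MVCtx


namespace MVCtx

variable {M : Type*} {β : Type*} [BooleanAlgebra β] (C : MVCtx M β)

/-- equidecomposability relation: φ-preserving iso of principal ideals -/
def Rel (a b : β) : Prop :=
  ∃ g : Set.Iic a ≃o Set.Iic b, ∀ x : Set.Iic a, C.φ (g x : β) = C.φ (x : β)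

lemma rel_refl (a : β) : C.Rel a a := ⟨OrderIso.refl _, fun _ => rfl⟩

lemma rel_symm {a b : β} (h : C.Rel a b) : C.Rel b a := by
  obtain ⟨g, hg⟩ := h
  refine ⟨g.symm, fun y => ?_⟩
  have := hg (g.symm y)
  rw [g.apply_symm_apply] at this
  exact this.symm

lemma rel_trans {a b c : β} (h1 : C.Rel a b) (h2 : C.Rel b c) : C.Rel a c := by
  obtain ⟨g1, hg1⟩ := h1
  obtain ⟨g2, hg2⟩ := h2
  exact ⟨g1.trans g2, fun x => (hg2 (g1 x)).trans (hg1 x)⟩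

lemma rel_str_str {a c p : M} (hap : C.E.D a p) (hcp : C.E.D c p) :
    C.Rel (C.str a (C.E.add a p)) (C.str c (C.E.add c p)) := by
  classical
  set s := C.str a (C.E.add a p) with hs
  set t := C.str c (C.E.add c p) with ht
  have hF : ∀ x : Set.Iic s, ∃ y, y ≤ t ∧ ∀ r, C.E.le r p →
      C.φ (y ⊓ C.str c (C.E.add c r)) = C.φ ((x : β) ⊓ C.str a (C.E.add a r)) :=
    fun x => C.transfer_exists hap hcp (Set.mem_Iic.mp x.2)
  have hG : ∀ y : Set.Iic t, ∃ x, x ≤ s ∧ ∀ r, C.E.le r p →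
      C.φ (x ⊓ C.str a (C.E.add a r)) = C.φ ((y : β) ⊓ C.str c (C.E.add c r)) :=
    fun y => C.transfer_exists hcp hap (Set.mem_Iic.mp y.2)
  let F : Set.Iic s → Set.Iic t := fun x =>
    ⟨(hF x).choose, Set.mem_Iic.mpr (hF x).choose_spec.1⟩
  let G : Set.Iic t → Set.Iic s := fun y =>
    ⟨(hG y).choose, Set.mem_Iic.mpr (hG y).choose_spec.1⟩
  have hFs : ∀ (x : Set.Iic s) (r : M), C.E.le r p →
      C.φ ((F x : β) ⊓ C.str c (C.E.add c r)) =
        C.φ ((x : β) ⊓ C.str a (C.E.add a r)) := fun x => (hF x).choose_spec.2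
  have hGs : ∀ (y : Set.Iic t) (r : M), C.E.le r p →
      C.φ ((G y : β) ⊓ C.str a (C.E.add a r)) =
        C.φ ((y : β) ⊓ C.str c (C.E.add c r)) := fun y => (hG y).choose_spec.2
  have hFle : ∀ x : Set.Iic s, (F x : β) ≤ t := fun x => Set.mem_Iic.mp (F x).2
  have hGle : ∀ y : Set.Iic t, (G y : β) ≤ s := fun y => Set.mem_Iic.mp (G y).2
  have hGF : ∀ x, G (F x) = x := by
    intro x
    apply Subtype.ext
    refine C.transfer_unique hap (hGle (F x)) (Set.mem_Iic.mp x.2) ?_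
    intro r hr
    rw [hGs (F x) r hr, hFs x r hr]
  have hFG : ∀ y, F (G y) = y := by
    intro y
    apply Subtype.ext
    refine C.transfer_unique hcp (hFle (G y)) (Set.mem_Iic.mp y.2) ?_
    intro r hr
    rw [hFs (G y) r hr, hGs y r hr]
  have hFmono : ∀ x₁ x₂ : Set.Iic s, x₁ ≤ x₂ → F x₁ ≤ F x₂ := by
    intro x₁ x₂ h
    exact Subtype.mk_le_mk.mpr (C.transfer_mono hap hcp (Set.mem_Iic.mp x₁.2)
      (Set.mem_Iic.mp x₂.2) (hFle x₁) (hFle x₂) (hFs x₁) (hFs x₂)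
      (Subtype.coe_le_coe.mpr h))
  have hGmono : ∀ y₁ y₂ : Set.Iic t, y₁ ≤ y₂ → G y₁ ≤ G y₂ := by
    intro y₁ y₂ h
    exact Subtype.mk_le_mk.mpr (C.transfer_mono hcp hap (Set.mem_Iic.mp y₁.2)
      (Set.mem_Iic.mp y₂.2) (hGle y₁) (hGle y₂) (hGs y₁) (hGs y₂)
      (Subtype.coe_le_coe.mpr h))
  refine ⟨⟨⟨F, G, hGF, hFG⟩, ?_⟩, ?_⟩
  · intro x₁ x₂
    constructor
    · intro h
      have := hGmono _ _ h
      rwa [hGF, hGF] at this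
    · exact hFmono x₁ x₂
  · intro x
    have h1 := hFs x p (C.E.le_refl p)
    have h2 : (F x : β) ⊓ C.str c (C.E.add c p) = (F x : β) :=
      _root_.inf_eq_left.2 (hFle x)
    have h3 : (x : β) ⊓ C.str a (C.E.add a p) = (x : β) :=
      _root_.inf_eq_left.2 (Set.mem_Iic.mp x.2)
    rw [h2, h3] at h1
    exact h1

end MVCtx


namespace MVCtx

variable {M : Type*} {β : Type*} [BooleanAlgebra β] (C : MVCtx M β)

lemma rel_glue {a₁ a₂ b₁ b₂ : β} (ha : a₁ ⊓ a₂ = ⊥) (hb : b₁ ⊓ b₂ = ⊥)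
    (h1 : C.Rel a₁ b₁) (h2 : C.Rel a₂ b₂) : C.Rel (a₁ ⊔ a₂) (b₁ ⊔ b₂) := by
  obtain ⟨g1, hg1⟩ := h1
  obtain ⟨g2, hg2⟩ := h2
  have memA : ∀ x : Set.Iic (a₁ ⊔ a₂), ((x : β) ⊓ a₁) ∈ Set.Iic a₁ :=
    fun x => Set.mem_Iic.mpr inf_le_right
  have memA2 : ∀ x : Set.Iic (a₁ ⊔ a₂), ((x : β) ⊓ a₂) ∈ Set.Iic a₂ :=
    fun x => Set.mem_Iic.mpr inf_le_right
  have memB : ∀ y : Set.Iic (b₁ ⊔ b₂), ((y : β) ⊓ b₁) ∈ Set.Iic b₁ :=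
    fun y => Set.mem_Iic.mpr inf_le_right
  have memB2 : ∀ y : Set.Iic (b₁ ⊔ b₂), ((y : β) ⊓ b₂) ∈ Set.Iic b₂ :=
    fun y => Set.mem_Iic.mpr inf_le_right
  let F : Set.Iic (a₁ ⊔ a₂) → Set.Iic (b₁ ⊔ b₂) := fun x =>
    ⟨(g1 ⟨_, memA x⟩ : β) ⊔ (g2 ⟨_, memA2 x⟩ : β), Set.mem_Iic.mpr
      (sup_le (le_trans (Set.mem_Iic.mp (g1 ⟨_, memA x⟩).2) le_sup_left)
        (le_trans (Set.mem_Iic.mp (g2 ⟨_, memA2 x⟩).2) le_sup_right))⟩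
  let G : Set.Iic (b₁ ⊔ b₂) → Set.Iic (a₁ ⊔ a₂) := fun y =>
    ⟨(g1.symm ⟨_, memB y⟩ : β) ⊔ (g2.symm ⟨_, memB2 y⟩ : β), Set.mem_Iic.mpr
      (sup_le (le_trans (Set.mem_Iic.mp (g1.symm ⟨_, memB y⟩).2) le_sup_left)
        (le_trans (Set.mem_Iic.mp (g2.symm ⟨_, memB2 y⟩).2) le_sup_right))⟩
  -- components of F
  have Fb1 : ∀ x, (F x : β) ⊓ b₁ = (g1 ⟨_, memA x⟩ : β) := by
    intro x
    show ((g1 ⟨_, memA x⟩ : β) ⊔ (g2 ⟨_, memA2 x⟩ : β)) ⊓ b₁ = _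
    rw [inf_sup_right, _root_.inf_eq_left.2 (Set.mem_Iic.mp (g1 ⟨_, memA x⟩).2)]
    have : (g2 ⟨_, memA2 x⟩ : β) ⊓ b₁ = ⊥ := by
      refine le_bot_iff.1 ?_
      calc (g2 ⟨_, memA2 x⟩ : β) ⊓ b₁ ≤ b₂ ⊓ b₁ :=
            inf_le_inf_right _ (Set.mem_Iic.mp (g2 ⟨_, memA2 x⟩).2)
        _ = ⊥ := by rw [inf_comm]; exact hb
    rw [this, sup_bot_eq]
  have Fb2 : ∀ x, (F x : β) ⊓ b₂ = (g2 ⟨_, memA2 x⟩ : β) := by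
    intro x
    show ((g1 ⟨_, memA x⟩ : β) ⊔ (g2 ⟨_, memA2 x⟩ : β)) ⊓ b₂ = _
    rw [inf_sup_right, _root_.inf_eq_left.2 (Set.mem_Iic.mp (g2 ⟨_, memA2 x⟩).2)]
    have : (g1 ⟨_, memA x⟩ : β) ⊓ b₂ = ⊥ := by
      refine le_bot_iff.1 ?_
      calc (g1 ⟨_, memA x⟩ : β) ⊓ b₂ ≤ b₁ ⊓ b₂ :=
            inf_le_inf_right _ (Set.mem_Iic.mp (g1 ⟨_, memA x⟩).2)
        _ = ⊥ := hb
    rw [this, bot_sup_eq]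
  have Ga1 : ∀ y, (G y : β) ⊓ a₁ = (g1.symm ⟨_, memB y⟩ : β) := by
    intro y
    show ((g1.symm ⟨_, memB y⟩ : β) ⊔ (g2.symm ⟨_, memB2 y⟩ : β)) ⊓ a₁ = _
    rw [inf_sup_right, _root_.inf_eq_left.2 (Set.mem_Iic.mp (g1.symm ⟨_, memB y⟩).2)]
    have : (g2.symm ⟨_, memB2 y⟩ : β) ⊓ a₁ = ⊥ := by
      refine le_bot_iff.1 ?_
      calc (g2.symm ⟨_, memB2 y⟩ : β) ⊓ a₁ ≤ a₂ ⊓ a₁ :=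
            inf_le_inf_right _ (Set.mem_Iic.mp (g2.symm ⟨_, memB2 y⟩).2)
        _ = ⊥ := by rw [inf_comm]; exact ha
    rw [this, sup_bot_eq]
  have Ga2 : ∀ y, (G y : β) ⊓ a₂ = (g2.symm ⟨_, memB2 y⟩ : β) := by
    intro y
    show ((g1.symm ⟨_, memB y⟩ : β) ⊔ (g2.symm ⟨_, memB2 y⟩ : β)) ⊓ a₂ = _
    rw [inf_sup_right, _root_.inf_eq_left.2 (Set.mem_Iic.mp (g2.symm ⟨_, memB2 y⟩).2)]
    have : (g1.symm ⟨_, memB y⟩ : β) ⊓ a₂ = ⊥ := by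
      refine le_bot_iff.1 ?_
      calc (g1.symm ⟨_, memB y⟩ : β) ⊓ a₂ ≤ a₁ ⊓ a₂ :=
            inf_le_inf_right _ (Set.mem_Iic.mp (g1.symm ⟨_, memB y⟩).2)
        _ = ⊥ := ha
    rw [this, bot_sup_eq]
  have splitA : ∀ x : Set.Iic (a₁ ⊔ a₂), ((x : β) ⊓ a₁) ⊔ ((x : β) ⊓ a₂) = (x : β) := by
    intro x
    rw [← inf_sup_left, _root_.inf_eq_left.2 (Set.mem_Iic.mp x.2)]
  have splitB : ∀ y : Set.Iic (b₁ ⊔ b₂), ((y : β) ⊓ b₁) ⊔ ((y : β) ⊓ b₂) = (y : β) := by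
    intro y
    rw [← inf_sup_left, _root_.inf_eq_left.2 (Set.mem_Iic.mp y.2)]
  have hGF : ∀ x, G (F x) = x := by
    intro x
    apply Subtype.ext
    show (g1.symm ⟨_, memB (F x)⟩ : β) ⊔ (g2.symm ⟨_, memB2 (F x)⟩ : β) = (x : β)
    have e1 : (⟨_, memB (F x)⟩ : Set.Iic b₁) = g1 ⟨_, memA x⟩ := Subtype.ext (Fb1 x)
    have e2 : (⟨_, memB2 (F x)⟩ : Set.Iic b₂) = g2 ⟨_, memA2 x⟩ := Subtype.ext (Fb2 x)
    rw [e1, e2, g1.symm_apply_apply, g2.symm_apply_apply]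
    exact splitA x
  have hFG : ∀ y, F (G y) = y := by
    intro y
    apply Subtype.ext
    show (g1 ⟨_, memA (G y)⟩ : β) ⊔ (g2 ⟨_, memA2 (G y)⟩ : β) = (y : β)
    have e1 : (⟨_, memA (G y)⟩ : Set.Iic a₁) = g1.symm ⟨_, memB y⟩ := Subtype.ext (Ga1 y)
    have e2 : (⟨_, memA2 (G y)⟩ : Set.Iic a₂) = g2.symm ⟨_, memB2 y⟩ := Subtype.ext (Ga2 y)
    rw [e1, e2, g1.apply_symm_apply, g2.apply_symm_apply]
    exact splitB y
  have hFmono : ∀ x₁ x₂ : Set.Iic (a₁ ⊔ a₂), x₁ ≤ x₂ → F x₁ ≤ F x₂ := by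
    intro x₁ x₂ h
    have h1 : (g1 ⟨_, memA x₁⟩ : β) ≤ (g1 ⟨_, memA x₂⟩ : β) :=
      Subtype.coe_le_coe.mpr (g1.monotone (Subtype.mk_le_mk.mpr
        (inf_le_inf_right _ (Subtype.coe_le_coe.mpr h))))
    have h2 : (g2 ⟨_, memA2 x₁⟩ : β) ≤ (g2 ⟨_, memA2 x₂⟩ : β) :=
      Subtype.coe_le_coe.mpr (g2.monotone (Subtype.mk_le_mk.mpr
        (inf_le_inf_right _ (Subtype.coe_le_coe.mpr h))))
    exact Subtype.mk_le_mk.mpr (sup_le_sup h1 h2)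
  have hGmono : ∀ y₁ y₂ : Set.Iic (b₁ ⊔ b₂), y₁ ≤ y₂ → G y₁ ≤ G y₂ := by
    intro y₁ y₂ h
    have h1 : (g1.symm ⟨_, memB y₁⟩ : β) ≤ (g1.symm ⟨_, memB y₂⟩ : β) :=
      Subtype.coe_le_coe.mpr (g1.symm.monotone (Subtype.mk_le_mk.mpr
        (inf_le_inf_right _ (Subtype.coe_le_coe.mpr h))))
    have h2 : (g2.symm ⟨_, memB2 y₁⟩ : β) ≤ (g2.symm ⟨_, memB2 y₂⟩ : β) :=
      Subtype.coe_le_coe.mpr (g2.symm.monotone (Subtype.mk_le_mk.mpr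
        (inf_le_inf_right _ (Subtype.coe_le_coe.mpr h))))
    exact Subtype.mk_le_mk.mpr (sup_le_sup h1 h2)
  refine ⟨⟨⟨F, G, hGF, hFG⟩, ?_⟩, ?_⟩
  · intro x₁ x₂
    show F x₁ ≤ F x₂ ↔ x₁ ≤ x₂
    constructor
    · intro h
      have := hGmono _ _ h
      rwa [hGF, hGF] at this
    · exact hFmono x₁ x₂
  · intro x
    have hd1 : (g1 ⟨_, memA x⟩ : β) ⊓ (g2 ⟨_, memA2 x⟩ : β) = ⊥ := by
      refine le_bot_iff.1 ?_
      calc _ ≤ b₁ ⊓ b₂ := inf_le_inf (Set.mem_Iic.mp (g1 _).2) (Set.mem_Iic.mp (g2 _).2)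
        _ = ⊥ := hb
    have hd2 : ((x : β) ⊓ a₁) ⊓ ((x : β) ⊓ a₂) = ⊥ := by
      refine le_bot_iff.1 ?_
      calc _ ≤ a₁ ⊓ a₂ := inf_le_inf inf_le_right inf_le_right
        _ = ⊥ := ha
    show C.φ ((g1 ⟨_, memA x⟩ : β) ⊔ (g2 ⟨_, memA2 x⟩ : β)) = C.φ (x : β)
    rw [(C.hφadd _ _ hd1).2, hg1 ⟨_, memA x⟩, hg2 ⟨_, memA2 x⟩,
      ← (C.hφadd _ _ hd2).2, splitA x]

end MVCtx


namespace MVCtx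

variable {M : Type*} {β : Type*} [BooleanAlgebra β] (C : MVCtx M β)

lemma rel_js : ∀ {l : List (M × M)}, C.E.srtFrom C.E.zero l →
    C.Rel (C.js l) (C.e (C.φ (C.js l)))
  | [], _ => by
    rw [js_nil, C.phi_bot, C.hezero]
    exact C.rel_refl ⊥
  | (a, b) :: l, ⟨h1, h2, h3⟩ => by
    have hsl0 : C.E.srtFrom C.E.zero l :=
      EffectAlgebra.srtFrom_mono (C.E.zero_le b) h3
    have ih := rel_js hsl0
    set s := C.str a b with hs
    set v := C.js l with hv
    set c' := C.φ v with hc'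
    set p := C.φ s with hp
    have hdisj : s ⊓ v = ⊥ := C.str_disj_js h3
    have hps := C.phi_str h2
    have hDpc : C.E.D p c' := (C.hφadd s v hdisj).1
    have R1 : C.Rel s (C.e p) := by
      have h := C.rel_str_str hps.1 (C.E.D_zero_left p)
      rw [hps.2, C.E.zero_add, C.str_zero] at h
      exact h
    have R2 : C.Rel v (C.str p (C.E.add p c')) := by
      have h := C.rel_str_str (C.E.D_zero_left c') hDpc
      rw [C.E.zero_add, C.str_zero] at h
      exact C.rel_trans ih h
    have glue := C.rel_glue hdisj (C.e_disj_str p (C.E.add p c')) R1 R2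
    rw [C.e_sup_str (C.E.le_add_left hDpc)] at glue
    show C.Rel (s ⊔ v) (C.e (C.φ (s ⊔ v)))
    rw [(C.hφadd s v hdisj).2, ← hp, ← hc']
    exact glue

lemma rel_main (x : β) : C.Rel x (C.e (C.φ x)) := by
  obtain ⟨l, hs, rfl⟩ := C.hasRep_univ x
  exact C.rel_js hs

/-- the main existence theorem, backward direction -/
lemma main {u v : β} (h : C.φ u = C.φ v) :
    ∃ f : β ≃o β, (∀ x : β, C.φ (f x) = C.φ x) ∧ f u = v := by
  classical
  set a := u ⊓ vᶜ with ha
  set b := v ⊓ uᶜ with hb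
  have hab : a ⊓ b = ⊥ := by
    refine le_bot_iff.1 ?_
    calc a ⊓ b ≤ vᶜ ⊓ v := inf_le_inf inf_le_right inf_le_left
      _ = ⊥ := by simp
  -- φ a = φ b
  have hdu : (u ⊓ v) ⊓ a = ⊥ := by
    refine le_bot_iff.1 ?_
    calc (u ⊓ v) ⊓ a ≤ v ⊓ vᶜ := inf_le_inf inf_le_right inf_le_right
      _ = ⊥ := by simp
  have hdv : (u ⊓ v) ⊓ b = ⊥ := by
    refine le_bot_iff.1 ?_
    calc (u ⊓ v) ⊓ b ≤ u ⊓ uᶜ := inf_le_inf inf_le_left inf_le_right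
      _ = ⊥ := by simp
  have hju : (u ⊓ v) ⊔ a = u := by
    rw [ha, ← inf_sup_left]; simp
  have hjv : (u ⊓ v) ⊔ b = v := by
    rw [inf_comm u v, hb, ← inf_sup_left]
    simp
  have hphiab : C.φ a = C.φ b := by
    have e1 := (C.hφadd _ _ hdu).2
    have e2 := (C.hφadd _ _ hdv).2
    rw [hju] at e1
    rw [hjv] at e2
    exact C.E.cancel (C.hφadd _ _ hdu).1 (C.hφadd _ _ hdv).1
      (by rw [← e1, ← e2, h])
  have hrel : C.Rel a b := by
    have r1 := C.rel_main a
    have r2 := C.rel_main b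
    rw [hphiab] at r1
    exact C.rel_trans r1 (C.rel_symm r2)
  obtain ⟨g, hg⟩ := hrel
  have hgsymm : ∀ y : Set.Iic b, C.φ ((g.symm y : β)) = C.φ (y : β) := by
    intro y
    have := hg (g.symm y)
    rw [g.apply_symm_apply] at this
    exact this.symm
  set k := (a ⊔ b)ᶜ with hk
  have memA : ∀ x : β, x ⊓ a ∈ Set.Iic a := fun x => Set.mem_Iic.mpr inf_le_right
  have memB : ∀ x : β, x ⊓ b ∈ Set.Iic b := fun x => Set.mem_Iic.mpr inf_le_right
  set F : β → β := fun x =>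
    (g ⟨x ⊓ a, memA x⟩ : β) ⊔ (g.symm ⟨x ⊓ b, memB x⟩ : β) ⊔ (x ⊓ k) with hF
  have hga : ∀ x : β, (g ⟨x ⊓ a, memA x⟩ : β) ≤ b :=
    fun x => Set.mem_Iic.mp (g _).2
  have hgb : ∀ x : β, (g.symm ⟨x ⊓ b, memB x⟩ : β) ≤ a :=
    fun x => Set.mem_Iic.mp (g.symm _).2
  have hak : a ⊓ k = ⊥ := by
    refine le_bot_iff.1 ?_
    calc a ⊓ k ≤ (a ⊔ b) ⊓ (a ⊔ b)ᶜ := inf_le_inf le_sup_left le_rfl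
      _ = ⊥ := inf_compl_eq_bot
  have hbk : b ⊓ k = ⊥ := by
    refine le_bot_iff.1 ?_
    calc b ⊓ k ≤ (a ⊔ b) ⊓ (a ⊔ b)ᶜ := inf_le_inf le_sup_right le_rfl
      _ = ⊥ := inf_compl_eq_bot
  -- components of F
  have compa : ∀ x : β, F x ⊓ a = (g.symm ⟨x ⊓ b, memB x⟩ : β) := by
    intro x
    rw [hF]
    show ((g ⟨x ⊓ a, memA x⟩ : β) ⊔ (g.symm ⟨x ⊓ b, memB x⟩ : β) ⊔ (x ⊓ k)) ⊓ a = _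
    rw [inf_sup_right, inf_sup_right]
    have e1 : (g ⟨x ⊓ a, memA x⟩ : β) ⊓ a = ⊥ := by
      refine le_bot_iff.1 ?_
      calc _ ≤ b ⊓ a := inf_le_inf_right _ (hga x)
        _ = ⊥ := by rw [inf_comm]; exact hab
    have e2 : (g.symm ⟨x ⊓ b, memB x⟩ : β) ⊓ a = (g.symm ⟨x ⊓ b, memB x⟩ : β) :=
      _root_.inf_eq_left.2 (hgb x)
    have e3 : (x ⊓ k) ⊓ a = ⊥ := by
      refine le_bot_iff.1 ?_
      calc _ ≤ k ⊓ a := inf_le_inf_right _ inf_le_right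
        _ = ⊥ := by rw [inf_comm]; exact hak
    rw [e1, e2, e3, bot_sup_eq, sup_bot_eq]
  have compb : ∀ x : β, F x ⊓ b = (g ⟨x ⊓ a, memA x⟩ : β) := by
    intro x
    rw [hF]
    show ((g ⟨x ⊓ a, memA x⟩ : β) ⊔ (g.symm ⟨x ⊓ b, memB x⟩ : β) ⊔ (x ⊓ k)) ⊓ b = _
    rw [inf_sup_right, inf_sup_right]
    have e1 : (g ⟨x ⊓ a, memA x⟩ : β) ⊓ b = (g ⟨x ⊓ a, memA x⟩ : β) :=
      _root_.inf_eq_left.2 (hga x)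
    have e2 : (g.symm ⟨x ⊓ b, memB x⟩ : β) ⊓ b = ⊥ := by
      refine le_bot_iff.1 ?_
      calc _ ≤ a ⊓ b := inf_le_inf_right _ (hgb x)
        _ = ⊥ := hab
    have e3 : (x ⊓ k) ⊓ b = ⊥ := by
      refine le_bot_iff.1 ?_
      calc _ ≤ k ⊓ b := inf_le_inf_right _ inf_le_right
        _ = ⊥ := by rw [inf_comm]; exact hbk
    rw [e1, e2, e3, sup_bot_eq, sup_bot_eq]
  have compk : ∀ x : β, F x ⊓ k = x ⊓ k := by
    intro x
    rw [hF]
    show ((g ⟨x ⊓ a, memA x⟩ : β) ⊔ (g.symm ⟨x ⊓ b, memB x⟩ : β) ⊔ (x ⊓ k)) ⊓ k = _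
    rw [inf_sup_right, inf_sup_right]
    have e1 : (g ⟨x ⊓ a, memA x⟩ : β) ⊓ k = ⊥ := by
      refine le_bot_iff.1 ?_
      calc _ ≤ b ⊓ k := inf_le_inf_right _ (hga x)
        _ = ⊥ := hbk
    have e2 : (g.symm ⟨x ⊓ b, memB x⟩ : β) ⊓ k = ⊥ := by
      refine le_bot_iff.1 ?_
      calc _ ≤ a ⊓ k := inf_le_inf_right _ (hgb x)
        _ = ⊥ := hak
    have e3 : (x ⊓ k) ⊓ k = x ⊓ k := by rw [inf_assoc, inf_idem]
    rw [e1, e2, e3, bot_sup_eq, bot_sup_eq]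
  have habk : (a ⊔ b) ⊔ k = ⊤ := sup_compl_eq_top
  have splitx : ∀ x : β, ((x ⊓ a) ⊔ (x ⊓ b)) ⊔ (x ⊓ k) = x := by
    intro x
    rw [← inf_sup_left, ← inf_sup_left, habk, inf_top_eq]
  have hFF : ∀ x : β, F (F x) = x := by
    intro x
    have e1 : (⟨F x ⊓ a, memA (F x)⟩ : Set.Iic a) = g.symm ⟨x ⊓ b, memB x⟩ :=
      Subtype.ext (compa x)
    have e2 : (⟨F x ⊓ b, memB (F x)⟩ : Set.Iic b) = g ⟨x ⊓ a, memA x⟩ :=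
      Subtype.ext (compb x)
    calc F (F x) = (g ⟨F x ⊓ a, memA (F x)⟩ : β) ⊔
          (g.symm ⟨F x ⊓ b, memB (F x)⟩ : β) ⊔ (F x ⊓ k) := rfl
      _ = (x ⊓ b) ⊔ (x ⊓ a) ⊔ (x ⊓ k) := by
          rw [e1, e2, g.apply_symm_apply, g.symm_apply_apply, compk x]
      _ = x := by rw [sup_comm (x ⊓ b) (x ⊓ a)]; exact splitx x
  have hFmono : Monotone F := by
    intro x y hxy
    have m1 : (g ⟨x ⊓ a, memA x⟩ : β) ≤ (g ⟨y ⊓ a, memA y⟩ : β) :=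
      Subtype.coe_le_coe.mpr (g.monotone (Subtype.mk_le_mk.mpr
        (inf_le_inf_right _ hxy)))
    have m2 : (g.symm ⟨x ⊓ b, memB x⟩ : β) ≤ (g.symm ⟨y ⊓ b, memB y⟩ : β) :=
      Subtype.coe_le_coe.mpr (g.symm.monotone (Subtype.mk_le_mk.mpr
        (inf_le_inf_right _ hxy)))
    exact sup_le_sup (sup_le_sup m1 m2) (inf_le_inf_right _ hxy)
  have hFphi : ∀ x : β, C.φ (F x) = C.φ x := by
    intro x
    have d12 : (g ⟨x ⊓ a, memA x⟩ : β) ⊓ (g.symm ⟨x ⊓ b, memB x⟩ : β) = ⊥ := by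
      refine le_bot_iff.1 ?_
      calc _ ≤ b ⊓ a := inf_le_inf (hga x) (hgb x)
        _ = ⊥ := by rw [inf_comm]; exact hab
    have d3 : ((g ⟨x ⊓ a, memA x⟩ : β) ⊔ (g.symm ⟨x ⊓ b, memB x⟩ : β)) ⊓ (x ⊓ k) = ⊥ := by
      refine le_bot_iff.1 ?_
      calc _ ≤ (a ⊔ b) ⊓ k :=
            inf_le_inf (sup_le (le_trans (hga x) le_sup_right)
              (le_trans (hgb x) le_sup_left)) inf_le_right
        _ = ⊥ := inf_compl_eq_bot
    have dx12 : (x ⊓ a) ⊓ (x ⊓ b) = ⊥ := by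
      refine le_bot_iff.1 ?_
      calc _ ≤ a ⊓ b := inf_le_inf inf_le_right inf_le_right
        _ = ⊥ := hab
    have dx3 : ((x ⊓ a) ⊔ (x ⊓ b)) ⊓ (x ⊓ k) = ⊥ := by
      refine le_bot_iff.1 ?_
      calc _ ≤ (a ⊔ b) ⊓ k :=
            inf_le_inf (sup_le (le_trans inf_le_right le_sup_left)
              (le_trans inf_le_right le_sup_right)) inf_le_right
        _ = ⊥ := inf_compl_eq_bot
    have e1 := (C.hφadd _ _ d12).2
    have e2 := (C.hφadd _ _ d3).2
    have f1 := (C.hφadd _ _ dx12).2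
    have f2 := (C.hφadd _ _ dx3).2
    rw [splitx x] at f2
    show C.φ ((g ⟨x ⊓ a, memA x⟩ : β) ⊔ (g.symm ⟨x ⊓ b, memB x⟩ : β) ⊔ (x ⊓ k)) = C.φ x
    rw [e2, e1, hg ⟨x ⊓ a, memA x⟩, hgsymm ⟨x ⊓ b, memB x⟩, f2, f1]
  have hau : a ≤ u := inf_le_left
  have c1 : u ⊓ a = a := _root_.inf_eq_right.2 hau
  have c2 : u ⊓ b = ⊥ := by
    rw [hb, ← inf_assoc, inf_comm u v, inf_assoc]
    simp
  have c3 : u ⊓ k = u ⊓ v := by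
    apply le_antisymm
    · refine le_inf inf_le_left ?_
      have h1 : k ≤ aᶜ := by rw [hk]; exact compl_le_compl le_sup_left
      have h2 : u ⊓ aᶜ ≤ v := by
        rw [ha, compl_inf, compl_compl, inf_sup_left]
        rw [inf_compl_eq_bot, bot_sup_eq]
        exact inf_le_right
      exact le_trans (inf_le_inf_left u h1) h2
    · refine le_inf inf_le_left ?_
      rw [hk]
      refine le_compl_iff_disjoint_right.2 (disjoint_iff.2 ?_)
      rw [inf_sup_left, hdu, hdv, sup_idem]
  have gtop : (g ⟨a, Set.mem_Iic.mpr le_rfl⟩ : β) = b := by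
    have hb1 : (g.symm ⟨b, Set.mem_Iic.mpr le_rfl⟩) ≤ ⟨a, Set.mem_Iic.mpr le_rfl⟩ :=
      Subtype.coe_le_coe.mp (Set.mem_Iic.mp (g.symm _).2)
    have h2 := g.monotone hb1
    rw [g.apply_symm_apply] at h2
    exact le_antisymm (Set.mem_Iic.mp (g _).2) (Subtype.coe_le_coe.mpr h2)
  have gsbot : (g.symm ⟨⊥, Set.mem_Iic.mpr bot_le⟩ : β) = ⊥ := by
    have h0 : (g ⟨⊥, Set.mem_Iic.mpr bot_le⟩) ≥ (⟨⊥, Set.mem_Iic.mpr bot_le⟩ : Set.Iic b) :=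
      Subtype.coe_le_coe.mp bot_le
    have h2 := g.symm.monotone h0
    rw [g.symm_apply_apply] at h2
    exact le_bot_iff.1 (Subtype.coe_le_coe.mpr h2)
  have hFu : F u = v := by
    have e1 : (⟨u ⊓ a, memA u⟩ : Set.Iic a) = ⟨a, Set.mem_Iic.mpr le_rfl⟩ :=
      Subtype.ext c1
    have e2 : (⟨u ⊓ b, memB u⟩ : Set.Iic b) = ⟨⊥, Set.mem_Iic.mpr bot_le⟩ :=
      Subtype.ext c2
    show (g ⟨u ⊓ a, memA u⟩ : β) ⊔ (g.symm ⟨u ⊓ b, memB u⟩ : β) ⊔ (u ⊓ k) = v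
    rw [e1, e2, gtop, gsbot, c3, sup_bot_eq, hb, inf_comm u v, ← inf_sup_left]
    simp
  refine ⟨⟨⟨F, F, hFF, hFF⟩, ?_⟩, ?_, ?_⟩
  · intro x y
    show F x ≤ F y ↔ x ≤ y
    constructor
    · intro h2
      have h3 := hFmono h2
      rwa [hFF, hFF] at h3
    · exact fun h2 => hFmono h2
  · exact fun x => hFphi x
  · exact hFu

end MVCtx

/-- let `M` be an MV-effect algebra, `β = B(M)` the Boolean algebra
R-generated by `M` (via the 0,1-lattice embedding `e`), and `φ = φ_M : B(M) → M` the
canonical morphism of effect algebras fixing `M` pointwise (which is uniquely determined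
by these properties, and is given on chain representations by
`φ(x₁ + ⋯ + x_{2n}) = ⊕ᵢ (x_{2i} ⊖ x_{2i-1})`).  Then for all `u, v ∈ B(M)` there is a
`φ`-preserving automorphism `f` of `B(M)` with `f(u) = v` iff `φ(u) = φ(v)`. -/
theorem stmt19 {M β : Type*} [BooleanAlgebra β]
    (E : EffectAlgebra M) (sup inf : M → M → M)
    (hsup : ∀ a b : M, E.le a (sup a b) ∧ E.le b (sup a b) ∧
      ∀ c, E.le a c → E.le b c → E.le (sup a b) c)
    (hinf : ∀ a b : M, E.le (inf a b) a ∧ E.le (inf a b) b ∧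
      ∀ c, E.le c a → E.le c b → E.le c (inf a b))
    (hmv : ∀ a b : M, E.sub (sup a b) a = E.sub b (inf a b))
    -- e : M → B(M) is a 0,1-lattice embedding
    (e : M → β) (hinj : Function.Injective e)
    (hezero : e E.zero = ⊥) (heone : e E.one = ⊤)
    (heinf : ∀ a b : M, e (inf a b) = e a ⊓ e b)
    (hesup : ∀ a b : M, e (sup a b) = e a ⊔ e b)
    -- the image of M R-generates B(M)
    (hgen : ∀ S : Set β, Set.range e ⊆ S → (∀ a ∈ S, aᶜ ∈ S) →
      (∀ a ∈ S, ∀ b ∈ S, a ⊓ b ∈ S) → (∀ a ∈ S, ∀ b ∈ S, a ⊔ b ∈ S) → S = Set.univ)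
    -- φ = φ_M : B(M) → M is the morphism of effect algebras fixing M pointwise
    (φ : β → M)
    (hφone : φ ⊤ = E.one)
    (hφadd : ∀ u v : β, u ⊓ v = ⊥ → E.D (φ u) (φ v) ∧ φ (u ⊔ v) = E.add (φ u) (φ v))
    (hφfix : ∀ m : M, φ (e m) = m)
    (u v : β) :
    (∃ f : β ≃o β, (∀ x : β, φ (f x) = φ x) ∧ f u = v) ↔ φ u = φ v := by
  constructor
  · rintro ⟨f, hf, rfl⟩
    exact (hf u).symm
  · intro h
    exact MVCtx.main ⟨E, sup, inf, hsup, hinf, e, hinj, hezero, heone, heinf, hesup,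
      hgen, φ, hφadd, hφfix⟩ h
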